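/- For all real θ₁, θ₂, θ₃, writing M(x) = Rotz(θ₃) * Roty(θ₂ + x) * Rotz(θ₁), it is not the case that both (i) (M(0).mulVec v) 2 = v 2 for every v : Fin 3 → ℝ, and (ii) (M(π/3).mulVec ![0,0,1]) 2 ≠ (M(−π/3).mulVec ![0,0,1]) 2. That is, the shared-parameter gate cannot simultaneously be distractor-invariant and assign distinct Z-coordinates to the two contexts starting from the north pole. -/

import Mathlib

noncomputable def Rotz (α : ℝ) : Matrix (Fin 3) (Fin 3) ℝ :=
  ![![Real.cos α, -Real.sin α, 0], ![Real.sin α, Real.cos α, 0], ![0, 0, 1]]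

noncomputable def Roty (β : ℝ) : Matrix (Fin 3) (Fin 3) ℝ :=
  ![![Real.cos β, 0, Real.sin β], ![0, 1, 0], ![-Real.sin β, 0, Real.cos β]]

noncomputable def M (θ₁ θ₂ θ₃ x : ℝ) : Matrix (Fin 3) (Fin 3) ℝ :=
  Rotz θ₃ * Roty (θ₂ + x) * Rotz θ₁

theorem stmt3 (θ₁ θ₂ θ₃ : ℝ) :
    ¬ ((∀ v : Fin 3 → ℝ, ((M θ₁ θ₂ θ₃ 0).mulVec v) 2 = v 2) ∧
       ((M θ₁ θ₂ θ₃ (Real.pi / 3)).mulVec ![0, 0, 1]) 2 ≠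
         ((M θ₁ θ₂ θ₃ (-(Real.pi / 3))).mulVec ![0, 0, 1]) 2) := by
  rintro ⟨h1, h2⟩
  have hc : Real.cos θ₂ = 1 := by
    have := h1 ![0, 0, 1]
    simp only [M, Matrix.mulVec, Matrix.mul_apply, dotProduct] at this
    simpa [Rotz, Roty,
      Fin.sum_univ_succ] using this
  have hs : Real.sin θ₂ = 0 := by
    nlinarith [Real.sin_sq_add_cos_sq θ₂]
  apply h2
  simp only [M, Matrix.mulVec, Matrix.mul_apply, dotProduct]
  simp [Rotz, Roty,
    Fin.sum_univ_succ, Real.cos_add, hc, hs]
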